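/- Let c₁, c₂, c₃, c₄ be real constants and let β : ℝ³ → ℝ be defined by β(x₁,x₂,z) = ((c₁x₁ + c₂)(c₃z + c₄))⁻¹ on the region U = {(x₁,x₂,z) : (c₁x₁ + c₂)(c₃z + c₄) ≠ 0}. Then at every point of U, Σᵢ₌₁² (β·∂ᵢ∂ᵢβ − 2·(∂ᵢβ)²) + 2·(β·∂_z∂_zβ − 2·(∂_zβ)²) = 0. -/

import Mathlib

/-- The partial derivative of `f : ℝⁿ → ℝ` in the `i`-th coordinate direction. -/
noncomputable def pd {n : ℕ} (i : Fin n) (f : (Fin n → ℝ) → ℝ) : (Fin n → ℝ) → ℝ :=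
  fun x => deriv (fun s : ℝ => f (Function.update x i s)) (x i)

section aux

variable {c₁ c₂ c₃ c₄ : ℝ} {β : (Fin 3 → ℝ) → ℝ}
  (hβ : ∀ x : Fin 3 → ℝ, (c₁ * x 0 + c₂) * (c₃ * x 2 + c₄) ≠ 0 →
      β x = ((c₁ * x 0 + c₂) * (c₃ * x 2 + c₄))⁻¹)

include hβ

lemma pd0_eq : ∀ x : Fin 3 → ℝ, (c₁ * x 0 + c₂) * (c₃ * x 2 + c₄) ≠ 0 →
    pd 0 β x = -(c₁ * (c₃ * x 2 + c₄)) / ((c₁ * x 0 + c₂) * (c₃ * x 2 + c₄)) ^ 2 := by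
  intro x h
  have hcont : ContinuousAt (fun s : ℝ => (c₁ * s + c₂) * (c₃ * x 2 + c₄)) (x 0) := by
    fun_prop
  have hev : ∀ᶠ s in nhds (x 0), (c₁ * s + c₂) * (c₃ * x 2 + c₄) ≠ 0 :=
    hcont.eventually_ne h
  have heq : (fun s => β (Function.update x 0 s)) =ᶠ[nhds (x 0)]
      (fun s => ((c₁ * s + c₂) * (c₃ * x 2 + c₄))⁻¹) := by
    filter_upwards [hev] with s hs
    have := hβ (Function.update x 0 s) (by simpa using hs)
    simpa using this
  have h1 : HasDerivAt (fun s : ℝ => (c₁ * s + c₂) * (c₃ * x 2 + c₄))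
      (c₁ * (c₃ * x 2 + c₄)) (x 0) := by
    simpa using (((hasDerivAt_id (x 0)).const_mul c₁).add_const c₂).mul_const (c₃ * x 2 + c₄)
  have h2 := h1.inv h
  rw [pd, heq.deriv_eq]
  exact h2.deriv

lemma pd00_eq : ∀ x : Fin 3 → ℝ, (c₁ * x 0 + c₂) * (c₃ * x 2 + c₄) ≠ 0 →
    pd 0 (pd 0 β) x = -(c₁ * (c₃ * x 2 + c₄)) *
      (-((2 : ℕ) * ((c₁ * x 0 + c₂) * (c₃ * x 2 + c₄)) ^ (2 - 1) * (c₁ * (c₃ * x 2 + c₄))) /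
        (((c₁ * x 0 + c₂) * (c₃ * x 2 + c₄)) ^ 2) ^ 2) := by
  intro x h
  have hcont : ContinuousAt (fun s : ℝ => (c₁ * s + c₂) * (c₃ * x 2 + c₄)) (x 0) := by
    fun_prop
  have hev : ∀ᶠ s in nhds (x 0), (c₁ * s + c₂) * (c₃ * x 2 + c₄) ≠ 0 :=
    hcont.eventually_ne h
  have heq : (fun s => pd 0 β (Function.update x 0 s)) =ᶠ[nhds (x 0)]
      (fun s => -(c₁ * (c₃ * x 2 + c₄)) / ((c₁ * s + c₂) * (c₃ * x 2 + c₄)) ^ 2) := by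
    filter_upwards [hev] with s hs
    have := pd0_eq hβ (Function.update x 0 s) (by simpa using hs)
    simpa using this
  have h1 : HasDerivAt (fun s : ℝ => (c₁ * s + c₂) * (c₃ * x 2 + c₄))
      (c₁ * (c₃ * x 2 + c₄)) (x 0) := by
    simpa using (((hasDerivAt_id (x 0)).const_mul c₁).add_const c₂).mul_const (c₃ * x 2 + c₄)
  have hsq : ((c₁ * x 0 + c₂) * (c₃ * x 2 + c₄)) ^ 2 ≠ 0 := pow_ne_zero _ h
  have h2 := ((h1.pow 2).inv hsq).const_mul (-(c₁ * (c₃ * x 2 + c₄)))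
  have h3 : (fun s : ℝ => -(c₁ * (c₃ * x 2 + c₄)) / ((c₁ * s + c₂) * (c₃ * x 2 + c₄)) ^ 2)
      = fun s : ℝ => -(c₁ * (c₃ * x 2 + c₄)) * (((c₁ * s + c₂) * (c₃ * x 2 + c₄)) ^ 2)⁻¹ := by
    funext s; rw [div_eq_mul_inv]
  rw [pd, heq.deriv_eq, h3]
  exact h2.deriv

lemma pd2_eq : ∀ x : Fin 3 → ℝ, (c₁ * x 0 + c₂) * (c₃ * x 2 + c₄) ≠ 0 →
    pd 2 β x = -((c₁ * x 0 + c₂) * c₃) / ((c₁ * x 0 + c₂) * (c₃ * x 2 + c₄)) ^ 2 := by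
  intro x h
  have hcont : ContinuousAt (fun s : ℝ => (c₁ * x 0 + c₂) * (c₃ * s + c₄)) (x 2) := by
    fun_prop
  have hev : ∀ᶠ s in nhds (x 2), (c₁ * x 0 + c₂) * (c₃ * s + c₄) ≠ 0 :=
    hcont.eventually_ne h
  have heq : (fun s => β (Function.update x 2 s)) =ᶠ[nhds (x 2)]
      (fun s => ((c₁ * x 0 + c₂) * (c₃ * s + c₄))⁻¹) := by
    filter_upwards [hev] with s hs
    have := hβ (Function.update x 2 s) (by simpa using hs)
    simpa using this
  have h1 : HasDerivAt (fun s : ℝ => (c₁ * x 0 + c₂) * (c₃ * s + c₄))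
      ((c₁ * x 0 + c₂) * c₃) (x 2) := by
    simpa using (((hasDerivAt_id (x 2)).const_mul c₃).add_const c₄).const_mul (c₁ * x 0 + c₂)
  have h2 := h1.inv h
  rw [pd, heq.deriv_eq]
  exact h2.deriv

lemma pd22_eq : ∀ x : Fin 3 → ℝ, (c₁ * x 0 + c₂) * (c₃ * x 2 + c₄) ≠ 0 →
    pd 2 (pd 2 β) x = -((c₁ * x 0 + c₂) * c₃) *
      (-((2 : ℕ) * ((c₁ * x 0 + c₂) * (c₃ * x 2 + c₄)) ^ (2 - 1) * ((c₁ * x 0 + c₂) * c₃)) /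
        (((c₁ * x 0 + c₂) * (c₃ * x 2 + c₄)) ^ 2) ^ 2) := by
  intro x h
  have hcont : ContinuousAt (fun s : ℝ => (c₁ * x 0 + c₂) * (c₃ * s + c₄)) (x 2) := by
    fun_prop
  have hev : ∀ᶠ s in nhds (x 2), (c₁ * x 0 + c₂) * (c₃ * s + c₄) ≠ 0 :=
    hcont.eventually_ne h
  have heq : (fun s => pd 2 β (Function.update x 2 s)) =ᶠ[nhds (x 2)]
      (fun s => -((c₁ * x 0 + c₂) * c₃) / ((c₁ * x 0 + c₂) * (c₃ * s + c₄)) ^ 2) := by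
    filter_upwards [hev] with s hs
    have := pd2_eq hβ (Function.update x 2 s) (by simpa using hs)
    simpa using this
  have h1 : HasDerivAt (fun s : ℝ => (c₁ * x 0 + c₂) * (c₃ * s + c₄))
      ((c₁ * x 0 + c₂) * c₃) (x 2) := by
    simpa using (((hasDerivAt_id (x 2)).const_mul c₃).add_const c₄).const_mul (c₁ * x 0 + c₂)
  have hsq : ((c₁ * x 0 + c₂) * (c₃ * x 2 + c₄)) ^ 2 ≠ 0 := pow_ne_zero _ h
  have h2 := ((h1.pow 2).inv hsq).const_mul (-((c₁ * x 0 + c₂) * c₃))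
  have h3 : (fun s : ℝ => -((c₁ * x 0 + c₂) * c₃) / ((c₁ * x 0 + c₂) * (c₃ * s + c₄)) ^ 2)
      = fun s : ℝ => -((c₁ * x 0 + c₂) * c₃) * (((c₁ * x 0 + c₂) * (c₃ * s + c₄)) ^ 2)⁻¹ := by
    funext s; rw [div_eq_mul_inv]
  rw [pd, heq.deriv_eq, h3]
  exact h2.deriv

lemma pd1_eq : ∀ x : Fin 3 → ℝ, (c₁ * x 0 + c₂) * (c₃ * x 2 + c₄) ≠ 0 →
    pd 1 β x = 0 := by
  intro x h
  have heq : (fun s => β (Function.update x 1 s))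
      = fun _ : ℝ => ((c₁ * x 0 + c₂) * (c₃ * x 2 + c₄))⁻¹ := by
    funext s
    have := hβ (Function.update x 1 s) (by simpa using h)
    simpa using this
  rw [pd, heq, deriv_const]

lemma pd11_eq : ∀ x : Fin 3 → ℝ, (c₁ * x 0 + c₂) * (c₃ * x 2 + c₄) ≠ 0 →
    pd 1 (pd 1 β) x = 0 := by
  intro x h
  have heq : (fun s => pd 1 β (Function.update x 1 s)) = fun _ : ℝ => (0 : ℝ) := by
    funext s
    exact pd1_eq hβ (Function.update x 1 s) (by simpa using h)
  rw [pd, heq, deriv_const]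

end aux

/-- Let `c₁, c₂, c₃, c₄` be real constants and
`β(x₁,x₂,z) = ((c₁x₁ + c₂)(c₃z + c₄))⁻¹` on `U = {(c₁x₁+c₂)(c₃z+c₄) ≠ 0}`.
Then at every point of `U`,
`Σᵢ₌₁² (β ∂ᵢ∂ᵢβ − 2(∂ᵢβ)²) + 2(β ∂_z∂_zβ − 2(∂_zβ)²) = 0`. -/
theorem stmt7 (c₁ c₂ c₃ c₄ : ℝ) (β : (Fin 3 → ℝ) → ℝ)
    (hβ : ∀ x : Fin 3 → ℝ, (c₁ * x 0 + c₂) * (c₃ * x 2 + c₄) ≠ 0 →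
      β x = ((c₁ * x 0 + c₂) * (c₃ * x 2 + c₄))⁻¹) :
    ∀ x : Fin 3 → ℝ, (c₁ * x 0 + c₂) * (c₃ * x 2 + c₄) ≠ 0 →
      (∑ i : Fin 2,
          (β x * pd i.castSucc (pd i.castSucc β) x - 2 * (pd i.castSucc β x) ^ 2))
        + 2 * (β x * pd 2 (pd 2 β) x - 2 * (pd 2 β x) ^ 2) = 0 := by
  intro x h
  have h0 : (0 : Fin 2).castSucc = (0 : Fin 3) := rfl
  have h1 : (1 : Fin 2).castSucc = (1 : Fin 3) := rfl
  have hA : c₁ * x 0 + c₂ ≠ 0 := fun hc => h (by rw [hc]; ring)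
  have hK : c₃ * x 2 + c₄ ≠ 0 := fun hc => h (by rw [hc]; ring)
  rw [Fin.sum_univ_two, h0, h1, hβ x h, pd0_eq hβ x h, pd00_eq hβ x h, pd1_eq hβ x h,
    pd11_eq hβ x h, pd2_eq hβ x h, pd22_eq hβ x h]
  field_simp
  ring
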